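/- Let α₀ ≥ 0, β ∈ (0,1), φ > 0 with φ > s* := α₀/(1−β), and let (aₖ) be nonnegative reals with a_{k+1} ≤ α₀ + β·aₖ for all k and a₀ > φ. Then for every natural number k ≥ ln((a₀ − s*)/(φ − s*))/ln(1/β), one has aₖ ≤ φ. In particular the reaching time into the band {a ≤ φ} is at most ⌈ln((a₀−s*)/(φ−s*))/ln(1/β)⌉ steps. -/

import Mathlib

/-- Quasi-sliding-mode reaching-time bound: for the affine contraction
recursion `a_{k+1} ≤ α₀ + β·a_k` with `β ∈ (0,1)`, fixed point
`s* = α₀/(1−β) < φ` and `a₀ > φ`, every step index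
`k ≥ ln((a₀ − s*)/(φ − s*)) / ln(1/β)` satisfies `a_k ≤ φ`. -/
theorem reaching_time_bound (α₀ β φ : ℝ) (hα : 0 ≤ α₀)
    (hβ0 : 0 < β) (hβ1 : β < 1) (hφ : 0 < φ)
    (hfix : α₀ / (1 - β) < φ)
    (a : ℕ → ℝ) (ha : ∀ k, 0 ≤ a k)
    (hrec : ∀ k, a (k + 1) ≤ α₀ + β * a k)
    (ha0 : φ < a 0) :
    ∀ k : ℕ,
      Real.log ((a 0 - α₀ / (1 - β)) / (φ - α₀ / (1 - β))) / Real.log (1 / β) ≤ (k : ℝ) →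
      a k ≤ φ := by
  set s : ℝ := α₀ / (1 - β) with hs
  have h1β : (0:ℝ) < 1 - β := by linarith
  have hsdef : α₀ = s * (1 - β) := by rw [hs, div_mul_cancel₀ _ h1β.ne']
  -- geometric decay
  have hgeo : ∀ k, a k - s ≤ β ^ k * (a 0 - s) := by
    intro k
    induction k with
    | zero => simp
    | succ n ih =>
      have := hrec n
      have : a (n+1) - s ≤ β * (a n - s) := by
        have h := hrec n
        nlinarith [h]
      calc a (n+1) - s ≤ β * (a n - s) := this
        _ ≤ β * (β ^ n * (a 0 - s)) := by
            exact mul_le_mul_of_nonneg_left ih hβ0.le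
        _ = β ^ (n+1) * (a 0 - s) := by ring
  have hφs : 0 < φ - s := by linarith
  have ha0s : 0 < a 0 - s := by linarith
  have hr : 0 < (a 0 - s) / (φ - s) := div_pos ha0s hφs
  have hlogβ : 0 < Real.log (1 / β) := by
    apply Real.log_pos
    rw [lt_div_iff₀ hβ0]; linarith
  intro k hk
  have hk' : Real.log ((a 0 - s) / (φ - s)) ≤ (k : ℝ) * Real.log (1 / β) := by
    rw [div_le_iff₀ hlogβ] at hk; linarith
  have hpow : (a 0 - s) / (φ - s) ≤ (1 / β) ^ k := by
    have hb : (0:ℝ) < (1/β) ^ k := pow_pos (by positivity) k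
    rw [← Real.log_le_log_iff hr hb, Real.log_pow]
    exact hk'
  have hβk : β ^ k * (a 0 - s) ≤ φ - s := by
    have hβk' : (0:ℝ) < β ^ k := pow_pos hβ0 k
    rw [div_le_iff₀ hφs] at hpow
    have := mul_le_mul_of_nonneg_left hpow hβk'.le
    have hcancel : β ^ k * (1/β) ^ k = 1 := by
      rw [← mul_pow]; field_simp; exact one_pow k
    nlinarith [hcancel]
  have := hgeo k
  linarith
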